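/- The input sequence P ∘ Q_π^j ∘ P (the parabola points, followed by the adversarial points with one raised point q_j, followed by the parabola points again) contains the vertices of its convex hull as a subsequence in x-sorted order. -/

import Mathlib

lemma mem_frontier_of_support {s : Set (ℝ × ℝ)} {x : ℝ × ℝ} (c : ℝ) (hx : x ∈ s)
    (h : ∀ y ∈ s, c * y.1 + y.2 ≤ c * x.1 + x.2) :
    x ∈ frontier (convexHull ℝ s) := by
  have hxh : x ∈ convexHull ℝ s := subset_convexHull ℝ s hx
  constructor
  · exact subset_closure hxh
  · intro hint
    rw [mem_interior_iff_mem_nhds, Metric.mem_nhds_iff] at hint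
    obtain ⟨δ, hδ, hball⟩ := hint
    have hlin : IsLinearMap ℝ (fun y : ℝ × ℝ => c * y.1 + y.2) := by
      constructor
      · intro a b; simp; ring
      · intro a b; simp [Prod.smul_fst, Prod.smul_snd, smul_eq_mul]; ring
    have hhs : convexHull ℝ s ⊆ {y : ℝ × ℝ | c * y.1 + y.2 ≤ c * x.1 + x.2} :=
      convexHull_min h (convex_halfSpace_le hlin _)
    have hy : (x.1, x.2 + δ/2) ∈ Metric.ball x δ := by
      rw [Metric.mem_ball, Prod.dist_eq]
      simp [Real.dist_eq]
      rw [abs_of_pos hδ]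
      constructor <;> linarith
    have := hhs (hball hy)
    simp only [Set.mem_setOf_eq] at this
    linarith

lemma triangle_interior (A B C q : ℝ × ℝ) (a b c : ℝ)
    (ha : 0 < a) (hb : 0 < b) (hc : 0 < c) (hsum : a + b + c = 1)
    (hq1 : q.1 = a * A.1 + b * B.1 + c * C.1)
    (hq2 : q.2 = a * A.2 + b * B.2 + c * C.2)
    (hd : (B.1 - A.1) * (C.2 - A.2) - (C.1 - A.1) * (B.2 - A.2) ≠ 0) :
    q ∈ interior (convexHull ℝ {A, B, C}) := by
  set d : ℝ := (B.1 - A.1) * (C.2 - A.2) - (C.1 - A.1) * (B.2 - A.2) with hdd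
  set fb : ℝ × ℝ → ℝ := fun z => ((z.1 - A.1) * (C.2 - A.2) - (C.1 - A.1) * (z.2 - A.2)) / d with hfb
  set fc : ℝ × ℝ → ℝ := fun z => ((B.1 - A.1) * (z.2 - A.2) - (z.1 - A.1) * (B.2 - A.2)) / d with hfc
  have hcontb : Continuous fb := by fun_prop
  have hcontc : Continuous fc := by fun_prop
  have hU : IsOpen {z : ℝ × ℝ | 0 < fb z ∧ 0 < fc z ∧ fb z + fc z < 1} := by
    refine ((isOpen_lt continuous_const hcontb).inter ((isOpen_lt continuous_const hcontc).inter
      (isOpen_lt (hcontb.add hcontc) continuous_const)))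
  have ha' : a = 1 - b - c := by linarith
  have hfbq : fb q = b := by
    rw [hfb]; field_simp
    rw [hq1, hq2, ha']; ring
  have hfcq : fc q = c := by
    rw [hfc]; field_simp
    rw [hq1, hq2, ha']; ring
  have hAm : A ∈ convexHull ℝ ({A, B, C} : Set (ℝ × ℝ)) :=
    subset_convexHull ℝ _ (by simp)
  have hBm : B ∈ convexHull ℝ ({A, B, C} : Set (ℝ × ℝ)) :=
    subset_convexHull ℝ _ (by simp)
  have hCm : C ∈ convexHull ℝ ({A, B, C} : Set (ℝ × ℝ)) :=
    subset_convexHull ℝ _ (by simp)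
  rw [mem_interior]
  refine ⟨_, ?_, hU, ⟨by rw [hfbq]; exact hb, by rw [hfcq]; exact hc,
    by rw [hfbq, hfcq]; linarith⟩⟩
  intro z hz
  obtain ⟨h1, h2, h3⟩ := hz
  set b' := fb z
  set c' := fc z
  have hzc : z = (1 - b' - c') • A + b' • B + c' • C := by
    have hx : z.1 = (1 - b' - c') * A.1 + b' * B.1 + c' * C.1 := by
      show z.1 = (1 - fb z - fc z) * A.1 + fb z * B.1 + fc z * C.1
      rw [hfb, hfc]; field_simp; ring
    have hy : z.2 = (1 - b' - c') * A.2 + b' * B.2 + c' * C.2 := by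
      show z.2 = (1 - fb z - fc z) * A.2 + fb z * B.2 + fc z * C.2
      rw [hfb, hfc]; field_simp; ring
    ext
    · simpa using hx
    · simpa using hy
  have hbc : 0 < b' + c' := by linarith
  set m : ℝ × ℝ := (b' / (b' + c')) • B + (c' / (b' + c')) • C with hm
  have hmhull : m ∈ convexHull ℝ ({A, B, C} : Set (ℝ × ℝ)) :=
    (convex_convexHull ℝ ({A, B, C} : Set (ℝ × ℝ))) hBm hCm (by positivity) (by positivity)
      (by field_simp)
  have : z ∈ segment ℝ A m := by
    refine ⟨1 - b' - c', b' + c', by linarith, le_of_lt hbc, by ring, ?_⟩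
    rw [hm, smul_add, smul_smul, smul_smul, hzc]
    rw [mul_div_cancel₀, mul_div_cancel₀]
    · module
    · exact ne_of_gt hbc
    · exact ne_of_gt hbc
  exact (convex_convexHull ℝ _).segment_subset hAm hmhull this

set_option maxHeartbeats 2000000 in
/-- the input sequence `P ∘ Q_π^j ∘ P` — the parabola points
`p_1, …, p_n`, followed by the adversarial points `Q_π^j` (where `q_k` for
`k ≠ j` lies slightly below the midpoint of the hull edge `p_{π(k)} p_{π(k)+1}`,
and `q_j` lies on the parabola), followed by the parabola points again —
contains the vertices of its convex hull as a subsequence sorted by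
`x`-coordinate. -/
theorem stmt19 (n : ℕ) (hn : 2 ≤ n) (π : ℕ → ℕ)
    (hπ : Set.BijOn π (Set.Icc 1 (n - 1)) (Set.Icc 1 (n - 1)))
    (j : ℕ) (hj : j ∈ Set.Icc 1 (n - 1))
    (p : ℕ → ℝ × ℝ) (hp : ∀ i : ℕ, p i = ((i : ℝ), (n : ℝ) ^ 2 - (i : ℝ) ^ 2)) :
    ∃ ε₀ : ℝ, 0 < ε₀ ∧ ∀ ε : ℝ, 0 < ε → ε < ε₀ →
      ∀ Q : ℕ → ℝ × ℝ,
        (∀ k ∈ Set.Icc 1 (n - 1), k ≠ j →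
          Q k = ((π k : ℝ) + 1 / 2,
            (n : ℝ) ^ 2 - (((π k : ℝ) + 1) ^ 2 + (π k : ℝ) ^ 2) / 2 - ε)) →
        Q j = ((π j : ℝ) + 1 / 2, (n : ℝ) ^ 2 - ((π j : ℝ) + 1 / 2) ^ 2) →
        ∀ I : List (ℝ × ℝ),
          I = ((List.range n).map fun i => p (i + 1)) ++
              ((List.range (n - 1)).map fun k => Q (k + 1)) ++
              ((List.range n).map fun i => p (i + 1)) →
          ∃ sub : List (ℝ × ℝ), sub.Sublist I ∧
            sub.Pairwise (fun u v => u.1 < v.1) ∧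
            ∀ v : ℝ × ℝ, v ∈ sub ↔
              (v ∈ I ∧ v ∈ frontier (convexHull ℝ {r : ℝ × ℝ | r ∈ I})) := by
  refine ⟨1/2, by norm_num, ?_⟩
  intro ε hε hε2 Q hQ hQj I hI
  obtain ⟨hj1, hj2⟩ := hj
  have hbmem : π j ∈ Set.Icc 1 (n-1) := hπ.mapsTo ⟨hj1, hj2⟩
  obtain ⟨hb1, hb2⟩ := hbmem
  set b := π j with hbdef
  -- membership characterization of I
  have hmemI : ∀ v : ℝ × ℝ, v ∈ I ↔
      ((∃ i, 1 ≤ i ∧ i ≤ n ∧ v = p i) ∨ (∃ k, 1 ≤ k ∧ k ≤ n - 1 ∧ v = Q k)) := by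
    intro v
    simp only [hI, List.mem_append, List.mem_map, List.mem_range]
    constructor
    · rintro ((⟨i, hi, rfl⟩ | ⟨k, hk, rfl⟩) | ⟨i, hi, rfl⟩)
      · exact Or.inl ⟨i+1, by omega, by omega, rfl⟩
      · exact Or.inr ⟨k+1, by omega, by omega, rfl⟩
      · exact Or.inl ⟨i+1, by omega, by omega, rfl⟩
    · rintro (⟨i, h1, h2, rfl⟩ | ⟨k, h1, h2, rfl⟩)
      · exact Or.inl (Or.inl ⟨i-1, by omega, by rw [Nat.sub_add_cancel h1]⟩)
      · exact Or.inl (Or.inr ⟨k-1, by omega, by rw [Nat.sub_add_cancel h1]⟩)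
  set S : Set (ℝ × ℝ) := {r : ℝ × ℝ | r ∈ I} with hS
  have hmemS : ∀ v : ℝ × ℝ, v ∈ S ↔ v ∈ I := fun v => Iff.rfl
  -- points of the parabola are on the frontier
  have hfrontP : ∀ i : ℕ, 1 ≤ i → i ≤ n → p i ∈ frontier (convexHull ℝ S) := by
    intro i hi1 hi2
    apply mem_frontier_of_support (2 * (i : ℝ))
    · exact (hmemI _).mpr (Or.inl ⟨i, hi1, hi2, rfl⟩)
    · intro y hy
      rcases (hmemI y).mp hy with ⟨m, hm1, hm2, rfl⟩ | ⟨k, hk1, hk2, rfl⟩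
      · rw [hp m, hp i]; dsimp only
        nlinarith [sq_nonneg ((m : ℝ) - i)]
      · by_cases hkj : k = j
        · subst hkj
          rw [hQj, hp i]; dsimp only
          nlinarith [sq_nonneg ((b : ℝ) + 1/2 - i)]
        · rw [hQ k ⟨hk1, hk2⟩ hkj, hp i]; dsimp only
          nlinarith [sq_nonneg ((π k : ℝ) - i), sq_nonneg ((π k : ℝ) + 1 - i), hε]
  -- the raised point is on the frontier
  have hfrontQ : Q j ∈ frontier (convexHull ℝ S) := by
    apply mem_frontier_of_support (2 * (b : ℝ) + 1)
    · exact (hmemI _).mpr (Or.inr ⟨j, hj1, hj2, rfl⟩)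
    · intro y hy
      rcases (hmemI y).mp hy with ⟨m, hm1, hm2, rfl⟩ | ⟨k, hk1, hk2, rfl⟩
      · rw [hp m, hQj]; dsimp only
        nlinarith [sq_nonneg ((m : ℝ) - b - 1/2)]
      · by_cases hkj : k = j
        · subst hkj; exact le_refl _
        · rw [hQ k ⟨hk1, hk2⟩ hkj, hQj]; dsimp only
          nlinarith [sq_nonneg ((π k : ℝ) - b - 1/2), sq_nonneg ((π k : ℝ) + 1 - b - 1/2), hε]
  -- the other adversarial points are interior
  have hintQ : ∀ k : ℕ, 1 ≤ k → k ≤ n - 1 → k ≠ j → Q k ∈ interior (convexHull ℝ S) := by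
    intro k hk1 hk2 hkj
    obtain ⟨ha1, ha2⟩ := hπ.mapsTo (⟨hk1, hk2⟩ : k ∈ Set.Icc 1 (n-1))
    set a := π k with hadef
    have hab : a ≠ b := fun h => hkj (hπ.injOn ⟨hk1, hk2⟩ ⟨hj1, hj2⟩ h)
    have hn3 : 3 ≤ n := by omega
    have hQk := hQ k ⟨hk1, hk2⟩ hkj
    rw [← hadef] at hQk
    have hA1 : (1 : ℝ) ≤ (a : ℝ) := by exact_mod_cast ha1
    by_cases hcase : a ≤ n - 2
    · -- use triangle p a, p (a+1), p n
      have hAn : (a : ℝ) ≤ (n : ℝ) - 2 := by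
        have : a + 2 ≤ n := by omega
        have := (Nat.cast_le (α := ℝ)).mpr this
        push_cast at this; linarith
      have hden : 0 < ((n : ℝ) - a) * ((n : ℝ) - a - 1) := by nlinarith
      obtain ⟨γ, hγpos, hγe⟩ : ∃ γ : ℝ, 0 < γ ∧ γ * (((n : ℝ) - a) * ((n : ℝ) - a - 1)) = ε :=
        ⟨ε / (((n : ℝ) - a) * ((n : ℝ) - a - 1)), div_pos hε hden,
          div_mul_cancel₀ _ (ne_of_gt hden)⟩
      have hγsmall : γ * ((n : ℝ) - a) < 1/2 := by
        have hpos : 0 < γ * ((n : ℝ) - a) := mul_pos hγpos (by linarith)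
        have hkey : γ * ((n : ℝ) - a) ≤ ε := by nlinarith
        linarith
      have hsub : ({p a, p (a+1), p n} : Set (ℝ × ℝ)) ⊆ S := by
        intro z hz
        rcases hz with rfl | rfl | rfl
        · exact (hmemI _).mpr (Or.inl ⟨a, by omega, by omega, rfl⟩)
        · exact (hmemI _).mpr (Or.inl ⟨a+1, by omega, by omega, rfl⟩)
        · exact (hmemI _).mpr (Or.inl ⟨n, by omega, le_refl n, rfl⟩)
      apply interior_mono (convexHull_mono hsub)
      apply triangle_interior (p a) (p (a+1)) (p n) (Q k)
        (1/2 + γ * ((n : ℝ) - a - 1)) (1/2 - γ * ((n : ℝ) - a)) γ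
      · nlinarith
      · linarith
      · exact hγpos
      · ring
      · rw [hQk, hp a, hp (a+1), hp n]; push_cast; ring
      · rw [hQk, hp a, hp (a+1), hp n]; push_cast
        linear_combination hγe
      · rw [hp a, hp (a+1), hp n]; push_cast
        intro h; nlinarith
    · -- a = n - 1 ; use triangle p a, p (a+1), p 1
      have ha : a = n - 1 := by omega
      have ha2' : 2 ≤ a := by omega
      have hA2 : (2 : ℝ) ≤ (a : ℝ) := by exact_mod_cast ha2'
      have hden : 0 < (a : ℝ) * ((a : ℝ) - 1) := by nlinarith
      obtain ⟨γ, hγpos, hγe⟩ : ∃ γ : ℝ, 0 < γ ∧ γ * ((a : ℝ) * ((a : ℝ) - 1)) = ε :=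
        ⟨ε / ((a : ℝ) * ((a : ℝ) - 1)), div_pos hε hden,
          div_mul_cancel₀ _ (ne_of_gt hden)⟩
      have hγsmall : γ * (a : ℝ) < 1/2 := by
        have hpos : 0 < γ * (a : ℝ) := mul_pos hγpos (by linarith)
        have hkey : γ * (a : ℝ) ≤ ε := by nlinarith
        linarith
      have hsub : ({p a, p (a+1), p 1} : Set (ℝ × ℝ)) ⊆ S := by
        intro z hz
        rcases hz with rfl | rfl | rfl
        · exact (hmemI _).mpr (Or.inl ⟨a, by omega, by omega, rfl⟩)
        · exact (hmemI _).mpr (Or.inl ⟨a+1, by omega, by omega, rfl⟩)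
        · exact (hmemI _).mpr (Or.inl ⟨1, le_refl 1, by omega, rfl⟩)
      apply interior_mono (convexHull_mono hsub)
      apply triangle_interior (p a) (p (a+1)) (p 1) (Q k)
        (1/2 - γ * (a : ℝ)) (1/2 + γ * ((a : ℝ) - 1)) γ
      · linarith
      · nlinarith
      · exact hγpos
      · ring
      · rw [hQk, hp a, hp (a+1), hp 1]; push_cast; ring
      · rw [hQk, hp a, hp (a+1), hp 1]; push_cast
        linear_combination hγe
      · rw [hp a, hp (a+1), hp 1]; push_cast
        intro h; nlinarith
  -- the subsequence
  refine ⟨((List.range b).map fun i => p (i+1)) ++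
      Q j :: ((List.range (n - b)).map fun i => p (b + i + 1)), ?_, ?_, ?_⟩
  · -- sublist
    rw [hI]
    have h1 : ((List.range b).map fun i => p (i+1)).Sublist
        ((List.range n).map fun i => p (i+1)) :=
      (List.range_sublist.mpr (by omega)).map _
    have h2 : [Q j].Sublist ((List.range (n-1)).map fun k => Q (k+1)) := by
      rw [List.singleton_sublist, List.mem_map]
      exact ⟨j - 1, by rw [List.mem_range]; omega, by rw [Nat.sub_add_cancel hj1]⟩
    have h3 : ((List.range (n - b)).map fun i => p (b + i + 1)).Sublist
        ((List.range n).map fun i => p (i+1)) := by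
      have hr : List.range n = List.range b ++ (List.range (n - b)).map (b + ·) := by
        rw [← List.range_add (n := b) (m := n - b)]
        congr 1; omega
      rw [hr, List.map_append, List.map_map]
      exact List.sublist_append_right _ _
    have hcomb : (((List.range b).map fun i => p (i+1)) ++
        ([Q j] ++ ((List.range (n - b)).map fun i => p (b + i + 1)))).Sublist
        (((List.range n).map fun i => p (i+1)) ++
          (((List.range (n-1)).map fun k => Q (k+1)) ++
            ((List.range n).map fun i => p (i+1)))) :=
      h1.append (h2.append h3)
    rw [List.append_assoc]
    simpa using hcomb
  · -- sorted
    rw [List.pairwise_append]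
    refine ⟨?_, ?_, ?_⟩
    · exact (List.pairwise_lt_range (n := b)).map _ (fun x y hxy => by
        rw [hp, hp]; dsimp only; exact_mod_cast Nat.succ_lt_succ hxy)
    · rw [List.pairwise_cons]
      constructor
      · rintro y hy
        obtain ⟨i, hi, rfl⟩ := List.mem_map.mp hy
        rw [hQj, hp]; dsimp only; push_cast; linarith [Nat.cast_nonneg (α := ℝ) i]
      · exact (List.pairwise_lt_range (n := n - b)).map _ (fun x y hxy => by
          rw [hp, hp]; dsimp only
          have : b + x + 1 < b + y + 1 := by omega
          exact_mod_cast this)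
    · intro x hx y hy
      obtain ⟨i, hi, rfl⟩ := List.mem_map.mp hx
      rw [List.mem_range] at hi
      rcases List.mem_cons.mp hy with rfl | hy'
      · rw [hQj, hp]; dsimp only
        have : (i : ℝ) + 1 ≤ (b : ℝ) := by exact_mod_cast Nat.succ_le_of_lt hi
        push_cast; linarith
      · obtain ⟨i', hi', rfl⟩ := List.mem_map.mp hy'
        rw [hp, hp]; dsimp only
        have : i + 1 < b + i' + 1 := by omega
        exact_mod_cast this
  · -- characterization
    intro v
    have hmemsub : (v ∈ ((List.range b).map fun i => p (i+1)) ++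
        Q j :: ((List.range (n - b)).map fun i => p (b + i + 1))) ↔
        ((∃ i, 1 ≤ i ∧ i ≤ n ∧ v = p i) ∨ v = Q j) := by
      simp only [List.mem_append, List.mem_cons, List.mem_map, List.mem_range]
      constructor
      · rintro (⟨i, hi, rfl⟩ | rfl | ⟨i, hi, rfl⟩)
        · exact Or.inl ⟨i+1, by omega, by omega, rfl⟩
        · exact Or.inr rfl
        · exact Or.inl ⟨b+i+1, by omega, by omega, rfl⟩
      · rintro (⟨i, h1, h2, rfl⟩ | rfl)
        · by_cases hib : i ≤ b
          · exact Or.inl ⟨i-1, by omega, by rw [Nat.sub_add_cancel h1]⟩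
          · refine Or.inr (Or.inr ⟨i - b - 1, by omega, ?_⟩)
            congr 1; omega
        · exact Or.inr (Or.inl rfl)
    rw [hmemsub]
    constructor
    · rintro (⟨i, h1, h2, rfl⟩ | rfl)
      · exact ⟨(hmemI _).mpr (Or.inl ⟨i, h1, h2, rfl⟩), hfrontP i h1 h2⟩
      · exact ⟨(hmemI _).mpr (Or.inr ⟨j, hj1, hj2, rfl⟩), hfrontQ⟩
    · rintro ⟨hvI, hvF⟩
      rcases (hmemI v).mp hvI with ⟨i, h1, h2, rfl⟩ | ⟨k, hk1, hk2, rfl⟩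
      · exact Or.inl ⟨i, h1, h2, rfl⟩
      · by_cases hkj : k = j
        · subst hkj; exact Or.inr rfl
        · exact absurd (hintQ k hk1 hk2 hkj) hvF.2
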